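/- Let f be a non-zero homogeneous discrete invariant whose degree is not divisible by the characteristic of K. Then [U, ∂f] = (deg f)·f ≠ 0; the submodule M_f of the module M of discrete covariants generated by U and ∂f over the ring R = K[a,b]^{Γ_n} of discrete invariants is free of rank 2 (U and ∂f are R-linearly independent); and f·M ⊆ M_f ⊆ M. In particular, for every discrete covariant p one has the identity (deg f)·f·p = −[∂f, p]·U + [U, p]·∂f. -/

import Mathlib

open MvPolynomial Matrix

noncomputable section

/-- Substitution action: `(act γ f)(v) = f (γ • v)`. -/
def act {K : Type*} [Field K] {m : ℕ} (γ : Matrix (Fin m) (Fin m) K)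
    (f : MvPolynomial (Fin m) K) : MvPolynomial (Fin m) K :=
  MvPolynomial.aeval (fun i => ∑ j, MvPolynomial.C (γ i j) * MvPolynomial.X j) f

/-- The Klein polynomial `D`. -/
def Dpoly (K : Type*) [Field K] (n : ℕ) : MvPolynomial (Fin 2) K :=
  if n = 2 then X 0 * (64 * X 0 ^ 2 - X 1 ^ 2)
  else if n = 3 then -(X 0 * (27 * X 0 ^ 3 + X 1 ^ 3))
  else if n = 4 then X 0 * X 1 * (16 * X 0 ^ 4 - X 1 ^ 4)
  else X 0 * X 1 * (X 0 ^ 10 - 11 * X 0 ^ 5 * X 1 ^ 5 - X 1 ^ 10)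

/-- The discrete invariant `c4`. -/
def c4p (K : Type*) [Field K] (n : ℕ) : MvPolynomial (Fin 2) K :=
  C (-1 / (((12 / (6 - n) : ℕ) : K) - 1) ^ 2) *
    (pderiv 0 (pderiv 0 (Dpoly K n)) * pderiv 1 (pderiv 1 (Dpoly K n)) -
      pderiv 0 (pderiv 1 (Dpoly K n)) ^ 2)

/-- The discrete invariant `c6`. -/
def c6p (K : Type*) [Field K] (n : ℕ) : MvPolynomial (Fin 2) K :=
  C (1 / ((4 * n / (6 - n) : ℕ) : K)) *
    (pderiv 0 (Dpoly K n) * pderiv 1 (c4p K n) - pderiv 1 (Dpoly K n) * pderiv 0 (c4p K n))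

def gen1 (K : Type*) [Field K] (ζ : K) (n : ℕ) : Matrix (Fin 2) (Fin 2) K :=
  if n = 2 then !![1, 1/8; 24, -1]
  else if n = 3 then !![1, 1/3; 6, -1]
  else if n = 4 then !![1, 1/2; 2, -1]
  else !![1 + ζ + ζ ^ 4, 1; 1, -(1 + ζ + ζ ^ 4)]

def gen2 (K : Type*) [Field K] (ζ : K) (n : ℕ) : Matrix (Fin 2) (Fin 2) K :=
  if n = 2 then !![1, 0; 0, -1] else !![1, 0; 0, ζ]

/-- The inverse image in `GL₂` of the subgroup `Δₙ ⊆ PGL₂` generated by the images of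
`gen1` and `gen2`; equivalently the subgroup of `GL₂` generated by these two matrices
together with the scalar matrices (the centre). -/
def DeltaLift (K : Type*) [Field K] (ζ : K) (n : ℕ) :
    Subgroup (Matrix.GeneralLinearGroup (Fin 2) K) :=
  Subgroup.closure
    ({g | (g : Matrix (Fin 2) (Fin 2) K) = gen1 K ζ n ∨
        (g : Matrix (Fin 2) (Fin 2) K) = gen2 K ζ n} ∪
      (Subgroup.center (Matrix.GeneralLinearGroup (Fin 2) K) : Set _))

/-- `Γ̃ₙ`, the preimage of `Δₙ` in `SL₂(K)`. -/
def GammaTilde (K : Type*) [Field K] (ζ : K) (n : ℕ) :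
    Subgroup (Matrix.SpecialLinearGroup (Fin 2) K) :=
  Subgroup.comap Matrix.SpecialLinearGroup.toGL (DeltaLift K ζ n)

/-- `Γₙ`, the commutator subgroup of `Γ̃ₙ`. -/
def Gamma (K : Type*) [Field K] (ζ : K) (n : ℕ) :
    Subgroup (Matrix.SpecialLinearGroup (Fin 2) K) :=
  ⁅GammaTilde K ζ n, GammaTilde K ζ n⁆

/-- A discrete invariant. -/
def IsDiscreteInvariant (K : Type*) [Field K] (ζ : K) (n : ℕ)
    (f : MvPolynomial (Fin 2) K) : Prop :=
  ∀ γ ∈ Gamma K ζ n, act (γ : Matrix (Fin 2) (Fin 2) K) f = f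

/-- The identity covariant `U = (a, b)`. -/
def Upair (K : Type*) [Field K] : MvPolynomial (Fin 2) K × MvPolynomial (Fin 2) K :=
  (X 0, X 1)

/-- `∂f = (−∂f/∂b, ∂f/∂a)`. -/
def dpair {K : Type*} [Field K] (f : MvPolynomial (Fin 2) K) :
    MvPolynomial (Fin 2) K × MvPolynomial (Fin 2) K :=
  (-(pderiv 1 f), pderiv 0 f)

/-- A matrix applied to a column vector of polynomials. -/
def matMul {K : Type*} [Field K] (γ : Matrix (Fin 2) (Fin 2) K)
    (p : MvPolynomial (Fin 2) K × MvPolynomial (Fin 2) K) :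
    MvPolynomial (Fin 2) K × MvPolynomial (Fin 2) K :=
  (C (γ 0 0) * p.1 + C (γ 0 1) * p.2, C (γ 1 0) * p.1 + C (γ 1 1) * p.2)

/-- A discrete covariant: `p ∘ γ = γ ∘ p` for all `γ ∈ Γₙ`. -/
def IsDiscreteCovariant (K : Type*) [Field K] (ζ : K) (n : ℕ)
    (p : MvPolynomial (Fin 2) K × MvPolynomial (Fin 2) K) : Prop :=
  ∀ γ ∈ Gamma K ζ n,
    (act (γ : Matrix (Fin 2) (Fin 2) K) p.1, act (γ : Matrix (Fin 2) (Fin 2) K) p.2) =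
      matMul (γ : Matrix (Fin 2) (Fin 2) K) p

/-- The alternating form `[p, q] = p₁q₂ − p₂q₁`. -/
def brkt {K : Type*} [Field K]
    (p q : MvPolynomial (Fin 2) K × MvPolynomial (Fin 2) K) : MvPolynomial (Fin 2) K :=
  p.1 * q.2 - p.2 * q.1



section AuxLemmas

variable {K : Type*} [Field K]

lemma euler_identity {f : MvPolynomial (Fin 2) K} {d : ℕ} (hf : f.IsHomogeneous d) :
    X 0 * pderiv 0 f + X 1 * pderiv 1 f = C (d : K) * f := by
  rw [← smul_eq_C_mul]
  conv_lhs => rw [f.as_sum]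
  conv_rhs => rw [f.as_sum]
  rw [map_sum, map_sum, Finset.mul_sum, Finset.mul_sum, Finset.smul_sum,
    ← Finset.sum_add_distrib]
  refine Finset.sum_congr rfl fun m hm => ?_
  have hdeg : m 0 + m 1 = d := by
    have h := hf (mem_support_iff.mp hm)
    rw [show (Finsupp.weight 1 : (Fin 2 →₀ ℕ) →+ ℕ) = Finsupp.weight (fun _ => 1) from rfl,
      ← Finsupp.degree_eq_weight_one] at h
    have h2 : ∑ i ∈ m.support, m i = ∑ i : Fin 2, m i :=
      Finset.sum_subset (Finset.subset_univ _)
        (fun i _ hi => Finsupp.notMem_support_iff.mp hi)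
    rw [Finsupp.degree_apply, h2, Fin.sum_univ_two] at h
    exact h
  have key : ∀ i : Fin 2, X i * pderiv i (monomial m (coeff m f))
      = (m i : K) • monomial m (coeff m f) := by
    intro i
    rw [pderiv_monomial, smul_eq_C_mul, C_mul_monomial]
    rcases Nat.eq_zero_or_pos (m i) with h | h
    · simp [h]
    · have hsum : Finsupp.single i 1 + (m - Finsupp.single i 1) = m := by
        ext j
        rcases eq_or_ne j i with rfl | hij
        · simp only [Finsupp.add_apply, Finsupp.tsub_apply, Finsupp.single_eq_same]
          omega
        · simp [Finsupp.add_apply, Finsupp.tsub_apply,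
            Finsupp.single_eq_of_ne' (Ne.symm hij)]
      rw [X, monomial_mul, one_mul, hsum, mul_comm]
  rw [key 0, key 1, ← add_smul, ← Nat.cast_add, hdeg]

lemma pderiv_act (γ : Matrix (Fin 2) (Fin 2) K) (f : MvPolynomial (Fin 2) K) (j : Fin 2) :
    pderiv j (act γ f) = ∑ i, C (γ i j) * act γ (pderiv i f) := by
  induction f using MvPolynomial.induction_on with
  | C a => simp [act, pderiv_C]
  | add p q hp hq =>
    simp only [act, map_add] at hp hq ⊢
    rw [hp, hq, ← Finset.sum_add_distrib]
    exact Finset.sum_congr rfl fun i _ => by ring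
  | mul_X p i hp =>
    simp only [act, _root_.map_mul, aeval_X] at hp ⊢
    rw [pderiv_mul, hp]
    have hX : pderiv j (∑ k, C (γ i k) * X k) = C (γ i j) := by
      rw [map_sum, Fin.sum_univ_two]
      fin_cases j <;> simp
    rw [hX]
    have hrhs : ∀ k : Fin 2, pderiv k (p * X i)
        = pderiv k p * X i + p * (if i = k then 1 else 0) := by
      intro k
      rw [pderiv_mul]
      congr 1
      rcases eq_or_ne i k with rfl | h
      · simp
      · simp [h]
    simp only [hrhs, map_add, _root_.map_mul, aeval_X]
    fin_cases i <;> fin_cases j <;>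
      simp only [Fin.sum_univ_two, Fin.zero_eta, Fin.mk_one, reduceIte, ite_true, ite_false,
        _root_.map_one, _root_.map_zero, mul_one, mul_zero, add_zero, zero_add,
        one_ne_zero, zero_ne_one] <;>
      ring

lemma act_mul (γ : Matrix (Fin 2) (Fin 2) K) (x y : MvPolynomial (Fin 2) K) :
    act γ (x * y) = act γ x * act γ y := by simp [act]

lemma act_neg (γ : Matrix (Fin 2) (Fin 2) K) (x : MvPolynomial (Fin 2) K) :
    act γ (-x) = -act γ x := by simp [act]

lemma act_sub (γ : Matrix (Fin 2) (Fin 2) K) (x y : MvPolynomial (Fin 2) K) :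
    act γ (x - y) = act γ x - act γ y := by simp [act]

lemma act_C (γ : Matrix (Fin 2) (Fin 2) K) (a : K) :
    act γ (C a : MvPolynomial (Fin 2) K) = C a := by simp [act, algebraMap_eq]

lemma detC_one (γ : Matrix.SpecialLinearGroup (Fin 2) K) :
    C ((γ : Matrix (Fin 2) (Fin 2) K) 0 0) * C ((γ : Matrix (Fin 2) (Fin 2) K) 1 1)
      - C ((γ : Matrix (Fin 2) (Fin 2) K) 0 1) * C ((γ : Matrix (Fin 2) (Fin 2) K) 1 0)
      = (1 : MvPolynomial (Fin 2) K) := by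
  have h := γ.det_coe
  rw [Matrix.det_fin_two] at h
  rw [← _root_.map_mul, ← _root_.map_mul, ← map_sub, h, _root_.map_one]

lemma act_pderiv_of_invariant (γ : Matrix.SpecialLinearGroup (Fin 2) K)
    (f : MvPolynomial (Fin 2) K)
    (hf : act (γ : Matrix (Fin 2) (Fin 2) K) f = f) :
    act (γ : Matrix (Fin 2) (Fin 2) K) (pderiv 0 f)
      = C ((γ : Matrix (Fin 2) (Fin 2) K) 1 1) * pderiv 0 f
        - C ((γ : Matrix (Fin 2) (Fin 2) K) 1 0) * pderiv 1 f ∧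
    act (γ : Matrix (Fin 2) (Fin 2) K) (pderiv 1 f)
      = C ((γ : Matrix (Fin 2) (Fin 2) K) 0 0) * pderiv 1 f
        - C ((γ : Matrix (Fin 2) (Fin 2) K) 0 1) * pderiv 0 f := by
  set g := (γ : Matrix (Fin 2) (Fin 2) K) with hg
  have hdetC := detC_one γ
  rw [← hg] at hdetC
  have e0 := pderiv_act g f 0
  have e1 := pderiv_act g f 1
  rw [hf, Fin.sum_univ_two] at e0 e1
  constructor
  · linear_combination (-(C (g 1 1))) * e0 + C (g 1 0) * e1
      - (act g (pderiv 0 f)) * hdetC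
  · linear_combination C (g 0 1) * e0 - C (g 0 0) * e1
      - (act g (pderiv 1 f)) * hdetC

end AuxLemmas

/-- For a non-zero homogeneous discrete invariant `f` of degree prime to the characteristic:
`[U,∂f] = (deg f)·f ≠ 0`; `U` and `∂f` are discrete covariants generating a free rank-2
module `M_f` over the ring of discrete invariants with `f·M ⊆ M_f ⊆ M`; and
`(deg f)·f·p = −[∂f,p]·U + [U,p]·∂f` for every discrete covariant `p`. -/
theorem free_submodule_Mf (K : Type*) [Field K] (n : ℕ)
    (hn : n ∈ ({2, 3, 4, 5} : Set ℕ))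
    (hchar : ∀ p : ℕ, p.Prime → CharP K p → ¬ p ∣ 6 * n)
    (ζ : K) (hζ : IsPrimitiveRoot ζ n)
    (f : MvPolynomial (Fin 2) K) (d : ℕ) (hf0 : f ≠ 0) (hfhom : f.IsHomogeneous d)
    (hfinv : IsDiscreteInvariant K ζ n f)
    (hd : (d : K) ≠ 0) :
    brkt (Upair K) (dpair f) = (d : K) • f ∧
    (d : K) • f ≠ 0 ∧
    IsDiscreteCovariant K ζ n (Upair K) ∧
    IsDiscreteCovariant K ζ n (dpair f) ∧
    (∀ r s : MvPolynomial (Fin 2) K,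
      IsDiscreteInvariant K ζ n r → IsDiscreteInvariant K ζ n s →
        r • Upair K + s • dpair f = 0 → r = 0 ∧ s = 0) ∧
    (∀ p : MvPolynomial (Fin 2) K × MvPolynomial (Fin 2) K,
      IsDiscreteCovariant K ζ n p →
        ∃ r s : MvPolynomial (Fin 2) K,
          IsDiscreteInvariant K ζ n r ∧ IsDiscreteInvariant K ζ n s ∧
            f • p = r • Upair K + s • dpair f) ∧
    (∀ p : MvPolynomial (Fin 2) K × MvPolynomial (Fin 2) K,
      IsDiscreteCovariant K ζ n p →
        ((d : K) • (f • p) =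
          (-(brkt (dpair f) p)) • Upair K + (brkt (Upair K) p) • dpair f)) := by
  classical
  set g2 := fun (γ : Matrix.SpecialLinearGroup (Fin 2) K) => (γ : Matrix (Fin 2) (Fin 2) K)
  have heuler : X 0 * pderiv 0 f + X 1 * pderiv 1 f = C (d : K) * f := euler_identity hfhom
  have hsmul : (d : K) • f = C (d : K) * f := smul_eq_C_mul _ _
  have hCd : (C (d : K) : MvPolynomial (Fin 2) K) ≠ 0 := fun h => hd (C_eq_zero.mp h)
  -- Part 3: U is a discrete covariant
  have hUcov : IsDiscreteCovariant K ζ n (Upair K) := by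
    intro γ _
    have h0 : act (g2 γ) (X 0 : MvPolynomial (Fin 2) K)
        = C (g2 γ 0 0) * X 0 + C (g2 γ 0 1) * X 1 := by
      simp [act, aeval_X, Fin.sum_univ_two]
    have h1 : act (g2 γ) (X 1 : MvPolynomial (Fin 2) K)
        = C (g2 γ 1 0) * X 0 + C (g2 γ 1 1) * X 1 := by
      simp [act, aeval_X, Fin.sum_univ_two]
    refine Prod.ext_iff.mpr ⟨?_, ?_⟩ <;> simp [Upair, matMul, h0, h1] <;> assumption
  -- Part 4: dpair f is a discrete covariant
  have hdcov : IsDiscreteCovariant K ζ n (dpair f) := by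
    intro γ hγ
    obtain ⟨hA0, hA1⟩ := act_pderiv_of_invariant γ f (hfinv γ hγ)
    refine Prod.ext_iff.mpr ⟨?_, ?_⟩
    · show act (g2 γ) (-(pderiv 1 f)) = _
      rw [act_neg, hA1]
      show _ = C (g2 γ 0 0) * (-(pderiv 1 f)) + C (g2 γ 0 1) * pderiv 0 f
      ring
    · show act (g2 γ) (pderiv 0 f) = _
      rw [hA0]
      show _ = C (g2 γ 1 0) * (-(pderiv 1 f)) + C (g2 γ 1 1) * pderiv 0 f
      ring
  -- brackets of covariants are invariants
  have hbrkt : ∀ p q : MvPolynomial (Fin 2) K × MvPolynomial (Fin 2) K,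
      IsDiscreteCovariant K ζ n p → IsDiscreteCovariant K ζ n q →
      IsDiscreteInvariant K ζ n (brkt p q) := by
    intro p q hp hq γ hγ
    have hp1 := congrArg Prod.fst (hp γ hγ)
    have hp2 := congrArg Prod.snd (hp γ hγ)
    have hq1 := congrArg Prod.fst (hq γ hγ)
    have hq2 := congrArg Prod.snd (hq γ hγ)
    simp only [matMul] at hp1 hp2 hq1 hq2
    have hdetC := detC_one γ
    show act (g2 γ) (p.1 * q.2 - p.2 * q.1) = _
    rw [act_sub, act_mul, act_mul, hp1, hp2, hq1, hq2]
    show _ = p.1 * q.2 - p.2 * q.1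
    linear_combination (p.1 * q.2 - p.2 * q.1) * hdetC
  -- Part 7 (the main identity), for arbitrary pairs
  have hmain : ∀ p : MvPolynomial (Fin 2) K × MvPolynomial (Fin 2) K,
      (d : K) • (f • p) =
        (-(brkt (dpair f) p)) • Upair K + (brkt (Upair K) p) • dpair f := by
    intro p
    refine Prod.ext_iff.mpr ⟨?_, ?_⟩
    · show (d : K) • (f * p.1)
        = (-(brkt (dpair f) p)) * X 0 + (brkt (Upair K) p) * (-(pderiv 1 f))
      rw [smul_eq_C_mul]
      simp only [brkt, dpair, Upair]
      linear_combination (-(p.1)) * heuler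
    · show (d : K) • (f * p.2)
        = (-(brkt (dpair f) p)) * X 1 + (brkt (Upair K) p) * (pderiv 0 f)
      rw [smul_eq_C_mul]
      simp only [brkt, dpair, Upair]
      linear_combination (-(p.2)) * heuler
  refine ⟨?_, ?_, hUcov, hdcov, ?_, ?_, fun p _ => hmain p⟩
  · -- Part 1
    show X 0 * pderiv 0 f - X 1 * (-(pderiv 1 f)) = _
    rw [hsmul]
    linear_combination heuler
  · -- Part 2
    exact smul_ne_zero hd hf0
  · -- Part 5: linear independence
    intro r s hr hs h
    have h1 : r * X 0 + s * (-(pderiv 1 f)) = 0 := by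
      have := congrArg Prod.fst h
      simpa [Upair, dpair, smul_eq_mul] using this
    have h2 : r * X 1 + s * (pderiv 0 f) = 0 := by
      have := congrArg Prod.snd h
      simpa [Upair, dpair, smul_eq_mul] using this
    have hrd : r * (C (d : K) * f) = 0 := by
      linear_combination pderiv 0 f * h1 + pderiv 1 f * h2 - r * heuler
    have hr0 : r = 0 := by
      rcases mul_eq_zero.mp hrd with h' | h'
      · exact h'
      · exact absurd (mul_eq_zero.mp h') (by push_neg; exact ⟨hCd, hf0⟩)
    subst hr0
    refine ⟨rfl, ?_⟩
    by_contra hs0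
    simp only [zero_mul, zero_add, mul_neg, neg_eq_zero] at h1 h2
    have hd1 : pderiv 1 f = 0 := by
      rcases mul_eq_zero.mp h1 with h' | h'
      · exact absurd h' hs0
      · exact h'
    have hd0 : pderiv 0 f = 0 := by
      rcases mul_eq_zero.mp h2 with h' | h'
      · exact absurd h' hs0
      · exact h'
    rw [hd0, hd1] at heuler
    simp only [mul_zero, add_zero] at heuler
    exact mul_ne_zero hCd hf0 heuler.symm
  · -- Part 6: generation
    intro p hp
    refine ⟨C ((d : K)⁻¹) * (-(brkt (dpair f) p)), C ((d : K)⁻¹) * brkt (Upair K) p,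
      ?_, ?_, ?_⟩
    · intro γ hγ
      have hb := hbrkt (dpair f) p hdcov hp γ hγ
      show act (g2 γ) (C ((d : K)⁻¹) * -(brkt (dpair f) p)) = _
      rw [act_mul, act_neg, hb, act_C]
    · intro γ hγ
      have hb := hbrkt (Upair K) p hUcov hp γ hγ
      show act (g2 γ) (C ((d : K)⁻¹) * brkt (Upair K) p) = _
      rw [act_mul, hb, act_C]
    · have hCinv : (C ((d : K)⁻¹) : MvPolynomial (Fin 2) K) * C ((d : K)) = 1 := by
        rw [← _root_.map_mul, inv_mul_cancel₀ hd, _root_.map_one]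
      have hm := hmain p
      rw [Prod.ext_iff] at hm
      obtain ⟨hm1, hm2⟩ := hm
      simp only [Prod.smul_fst, Prod.smul_snd, Prod.fst_add, Prod.snd_add,
        smul_eq_mul, smul_eq_C_mul, Upair, dpair, brkt] at hm1 hm2
      refine Prod.ext_iff.mpr ⟨?_, ?_⟩
      · simp only [Prod.smul_fst, Prod.fst_add, smul_eq_mul, brkt, Upair, dpair]
        linear_combination C ((d : K)⁻¹) * hm1 - f * p.1 * hCinv
      · simp only [Prod.smul_snd, Prod.snd_add, smul_eq_mul, brkt, Upair, dpair]
        linear_combination C ((d : K)⁻¹) * hm2 - f * p.2 * hCinv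


end
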